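/- Let s ∈ H_1(K̃_b) be an element with s ∉ θ_{1,b}(H_1(K_b)) + im(ψ_{b−1}). Then s has persistence interval (b, ∞) in H_1(K̃_•). -/

import Mathlib

/-- An abstract simplicial complex on a vertex type `α`: a collection of nonempty
finite subsets of `α` closed under passing to nonempty subsets. -/
structure AbsSC (α : Type) where
  faces : Set (Finset α)
  not_empty_mem : ∅ ∉ faces
  down_closed : ∀ {s t : Finset α}, s ∈ faces → t ⊆ s → t.Nonempty → t ∈ faces

namespace AbsSC

variable {α : Type}

/-- The vertex set of an abstract simplicial complex. -/
def vertexSet (K : AbsSC α) : Set α := {v | {v} ∈ K.faces}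

/-- The type of `q`-simplices (faces with `q+1` vertices). -/
def simplices (K : AbsSC α) (q : ℕ) : Type :=
  {s : Finset α // s ∈ K.faces ∧ s.card = q + 1}

/-- The space of `q`-chains over `ℤ/2`: formal sums of `q`-simplices. -/
abbrev Chain (K : AbsSC α) (q : ℕ) : Type := K.simplices q →₀ ZMod 2

/-- The sum of the `q`-dimensional faces of a `(q+1)`-simplex. -/
noncomputable def faceChain (K : AbsSC α) (q : ℕ) (s : K.simplices (q + 1)) : K.Chain q :=
  ∑ t ∈ (s.1.powersetCard (q + 1)).attach,
    Finsupp.single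
      ⟨t.1, by
        obtain ⟨hsub, hcard⟩ := Finset.mem_powersetCard.mp t.2
        refine ⟨K.down_closed s.2.1 hsub ?_, hcard⟩
        rw [← Finset.card_pos, hcard]
        omega⟩
      (1 : ZMod 2)

/-- The boundary map `∂_{q+1} : C_{q+1}(K) → C_q(K)`, sending each `(q+1)`-simplex to
the sum of its `q`-dimensional faces. -/
noncomputable def boundary (K : AbsSC α) (q : ℕ) :
    K.Chain (q + 1) →ₗ[ZMod 2] K.Chain q :=
  Finsupp.lsum (ZMod 2) fun s => LinearMap.toSpanSingleton (ZMod 2) (K.Chain q) (K.faceChain q s)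

/-- The cycle subspace: `ker ∂_q` (all of `C_0` in degree `0`). -/
noncomputable def cycles (K : AbsSC α) : (q : ℕ) → Submodule (ZMod 2) (K.Chain q)
  | 0 => ⊤
  | q + 1 => LinearMap.ker (K.boundary q)

/-- The boundaries, viewed as a submodule of the cycles. -/
noncomputable def boundariesIn (K : AbsSC α) (q : ℕ) :
    Submodule (ZMod 2) (K.cycles q) :=
  Submodule.comap (K.cycles q).subtype (LinearMap.range (K.boundary q))

/-- The `q`-th simplicial homology over `ℤ/2`: `H_q(K) = ker ∂_q / im ∂_{q+1}`. -/
def Homology (K : AbsSC α) (q : ℕ) : Type :=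
  (K.cycles q) ⧸ (K.boundariesIn q)

noncomputable instance (K : AbsSC α) (q : ℕ) : AddCommGroup (K.Homology q) :=
  inferInstanceAs (AddCommGroup ((K.cycles q) ⧸ (K.boundariesIn q)))

noncomputable instance (K : AbsSC α) (q : ℕ) : Module (ZMod 2) (K.Homology q) :=
  inferInstanceAs (Module (ZMod 2) ((K.cycles q) ⧸ (K.boundariesIn q)))

/-- The homology class of a cycle. -/
noncomputable def hClass (K : AbsSC α) (q : ℕ) (c : K.Chain q) (hc : c ∈ K.cycles q) :
    K.Homology q :=
  Submodule.Quotient.mk ⟨c, hc⟩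

/-- The chain map induced by an inclusion of simplicial complexes. -/
noncomputable def chainMap (K L : AbsSC α) (h : K.faces ⊆ L.faces) (q : ℕ) :
    K.Chain q →ₗ[ZMod 2] L.Chain q :=
  Finsupp.lmapDomain (ZMod 2) (ZMod 2) fun s : K.simplices q =>
    (⟨s.1, h s.2.1, s.2.2⟩ : L.simplices q)

/-- `θ` is the map on `q`-th homology induced by the inclusion `K ⊆ L`: it sends the
class of every cycle `c` of `K` to the class of the image chain of `c` in `L`. -/
def InducedHom (K L : AbsSC α) (q : ℕ)
    (θ : K.Homology q →ₗ[ZMod 2] L.Homology q) : Prop :=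
  ∃ h : K.faces ⊆ L.faces,
    ∀ (c : K.Chain q) (hc : c ∈ K.cycles q),
      ∃ hc' : chainMap K L h q c ∈ L.cycles q,
        θ (K.hClass q c hc) = L.hClass q (chainMap K L h q c) hc'

end AbsSC

/-- The faces of the gluing stars `S = S_1 ⊔ ⋯ ⊔ S_k`: for each `j`, the vertex `{z j}`,
the vertices `{v}` for `v ∈ P j`, and the edges `{z j, v}` for `v ∈ P j`. -/
def starFaces {α : Type} [DecidableEq α] {k : ℕ} (P : Fin k → Set α) (z : Fin k → α) :
    Set (Finset α) :=
  {s | ∃ j : Fin k, s = {z j} ∨ ∃ v ∈ P j, s = {v} ∨ s = {z j, v}}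

section Tower

variable {W : ℕ → Type} [∀ i, AddCommGroup (W i)] [∀ i, Module (ZMod 2) (W i)]

/-- The composite `φ_{i,j} = φ_{j-1} ∘ ⋯ ∘ φ_i` of the connecting maps of a tower
(the identity when `i = j`). -/
noncomputable def comps (φ : ∀ i, W i →ₗ[ZMod 2] W (i + 1)) {i j : ℕ} (h : i ≤ j) :
    W i →ₗ[ZMod 2] W j :=
  Nat.leRecOn (C := fun m => W i →ₗ[ZMod 2] W m) h (fun {m} g => (φ m).comp g) LinearMap.id

/-- `s ∈ W b` has persistence interval `(b, d)` with finite death `d ∈ {b+1, …, n}`: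
`s ∉ im φ_{b-1}`, `φ_{b,d'}(s) ∉ im φ_{b-1,d'}` for all `b ≤ d' < d`, and
`φ_{b,d}(s) ∈ im φ_{b-1,d}`. -/
def HasPersIntervalFin (φ : ∀ i, W i →ₗ[ZMod 2] W (i + 1)) (n b d : ℕ) (s : W b) : Prop :=
  ∃ (_ : 1 ≤ b) (hbd : b < d) (_ : d ≤ n),
    s ∉ LinearMap.range (comps φ (Nat.sub_le b 1)) ∧
    (∀ (d' : ℕ) (hd' : b ≤ d'), d' < d →
      comps φ hd' s ∉ LinearMap.range (comps φ (Nat.le_trans (Nat.sub_le b 1) hd'))) ∧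
    comps φ (Nat.le_of_lt hbd) s ∈
      LinearMap.range (comps φ (Nat.le_trans (Nat.sub_le b 1) (Nat.le_of_lt hbd)))

/-- `s ∈ W b` has persistence interval `(b, ∞)`: `s ∉ im φ_{b-1}` and
`φ_{b,d'}(s) ∉ im φ_{b-1,d'}` for all `b ≤ d' ≤ n`. -/
def HasPersIntervalInf (φ : ∀ i, W i →ₗ[ZMod 2] W (i + 1)) (n b : ℕ) (s : W b) : Prop :=
  ∃ _ : 1 ≤ b,
    s ∉ LinearMap.range (comps φ (Nat.sub_le b 1)) ∧
    ∀ (d' : ℕ) (hd' : b ≤ d'), d' ≤ n →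
      comps φ hd' s ∉ LinearMap.range (comps φ (Nat.le_trans (Nat.sub_le b 1) hd'))

end Tower
attribute [reducible] AbsSC.simplices
namespace AbsSC

variable {α : Type}

lemma chainMap_apply (K L : AbsSC α) (h : K.faces ⊆ L.faces) (q : ℕ) (c : K.Chain q) :
    chainMap K L h q c =
      Finsupp.mapDomain (fun s : K.simplices q => (⟨s.1, h s.2.1, s.2.2⟩ : L.simplices q)) c :=
  rfl

lemma simplexMap_injective (K L : AbsSC α) (h : K.faces ⊆ L.faces) (q : ℕ) :
    Function.Injective (fun s : K.simplices q => (⟨s.1, h s.2.1, s.2.2⟩ : L.simplices q)) :=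
  fun a b hab => by
    simp only [Subtype.mk.injEq] at hab
    exact Subtype.ext hab

lemma chainMap_injective (K L : AbsSC α) (h : K.faces ⊆ L.faces) (q : ℕ) :
    Function.Injective (chainMap K L h q) := by
  intro c1 c2 hc
  rw [chainMap_apply, chainMap_apply] at hc
  exact Finsupp.mapDomain_injective (simplexMap_injective K L h q) hc

lemma chainMap_id (K : AbsSC α) (h : K.faces ⊆ K.faces) (q : ℕ) (c : K.Chain q) :
    chainMap K K h q c = c := by
  rw [chainMap_apply]
  have : (fun s : K.simplices q => (⟨s.1, h s.2.1, s.2.2⟩ : K.simplices q)) = id := by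
    funext s; exact Subtype.ext rfl
  rw [this, Finsupp.mapDomain_id]

lemma chainMap_comp (K L M : AbsSC α) (h1 : K.faces ⊆ L.faces) (h2 : L.faces ⊆ M.faces)
    (q : ℕ) (c : K.Chain q) :
    chainMap L M h2 q (chainMap K L h1 q c) = chainMap K M (h1.trans h2) q c := by
  rw [chainMap_apply, chainMap_apply, chainMap_apply, ← Finsupp.mapDomain_comp]
  rfl

lemma chainMap_faceChain (K L : AbsSC α) (h : K.faces ⊆ L.faces) (q : ℕ)
    (s : K.simplices (q + 1)) :
    chainMap K L h q (K.faceChain q s) = L.faceChain q ⟨s.1, h s.2.1, s.2.2⟩ := by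
  rw [faceChain, map_sum, faceChain]
  refine Finset.sum_congr rfl fun t ht => ?_
  rw [chainMap_apply, Finsupp.mapDomain_single]

lemma boundary_single (K : AbsSC α) (q : ℕ) (s : K.simplices (q + 1)) (m : ZMod 2) :
    K.boundary q (Finsupp.single s m) = m • K.faceChain q s := by
  rw [boundary, Finsupp.lsum_single, LinearMap.toSpanSingleton_apply]

lemma boundary_chainMap (K L : AbsSC α) (h : K.faces ⊆ L.faces) (q : ℕ) (c : K.Chain (q + 1)) :
    L.boundary q (chainMap K L h (q + 1) c) = chainMap K L h q (K.boundary q c) := by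
  have : (L.boundary q).comp (chainMap K L h (q + 1)) =
      (chainMap K L h q).comp (K.boundary q) := by
    apply Finsupp.lhom_ext
    intro a m
    simp only [LinearMap.comp_apply, boundary_single, map_smul]
    rw [chainMap_apply, Finsupp.mapDomain_single, boundary_single, chainMap_faceChain]
  exact LinearMap.congr_fun this c

lemma mem_cycles_one (K : AbsSC α) (c : K.Chain 1) :
    c ∈ K.cycles 1 ↔ K.boundary 0 c = 0 := by
  show c ∈ LinearMap.ker (K.boundary 0) ↔ _
  exact LinearMap.mem_ker

lemma chainMap_cycle (K L : AbsSC α) (h : K.faces ⊆ L.faces) (c : K.Chain 1)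
    (hc : c ∈ K.cycles 1) : chainMap K L h 1 c ∈ L.cycles 1 := by
  rw [mem_cycles_one] at hc ⊢
  rw [boundary_chainMap, hc, map_zero]

lemma hClass_congr (K : AbsSC α) (q : ℕ) {c1 c2 : K.Chain q} (h : c1 = c2)
    (h1 : c1 ∈ K.cycles q) (h2 : c2 ∈ K.cycles q) :
    K.hClass q c1 h1 = K.hClass q c2 h2 := by subst h; rfl

lemma hClass_eq_zero (K : AbsSC α) (q : ℕ) (c : K.Chain q) (hc : c ∈ K.cycles q) :
    K.hClass q c hc = 0 ↔ c ∈ LinearMap.range (K.boundary q) := by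
  rw [hClass]
  refine (Submodule.Quotient.mk_eq_zero (K.boundariesIn q)).trans ?_
  simp [boundariesIn, Submodule.mem_comap]

end AbsSC
section CompsLemmas

variable {W : ℕ → Type} [∀ i, AddCommGroup (W i)] [∀ i, Module (ZMod 2) (W i)]
  (φ : ∀ i, W i →ₗ[ZMod 2] W (i + 1))

lemma comps_self {i : ℕ} (h : i ≤ i) : comps φ h = LinearMap.id :=
  Nat.leRecOn_self _

lemma comps_succ {i m : ℕ} (h1 : i ≤ m) (h2 : i ≤ m + 1) :
    comps φ h2 = (φ m).comp (comps φ h1) :=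
  Nat.leRecOn_succ h1 _

lemma comps_trans {i j l : ℕ} (h1 : i ≤ j) (h2 : j ≤ l) (h3 : i ≤ l) :
    comps φ h3 = (comps φ h2).comp (comps φ h1) := by
  induction l, h2 using Nat.le_induction with
  | base => rw [comps_self, LinearMap.id_comp]
  | succ m hm ih =>
    rw [comps_succ φ (h1.trans hm) h3, comps_succ φ hm (hm.trans m.le_succ),
      ih (h1.trans hm), LinearMap.comp_assoc]

end CompsLemmas
lemma starFaces_card_le {α : Type} [DecidableEq α] {k : ℕ} {P : Fin k → Set α} {z : Fin k → α}
    {t : Finset α} (ht : t ∈ starFaces P z) : t.card ≤ 2 := by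
  obtain ⟨j, h⟩ := ht
  rcases h with h | ⟨v, hv, h | h⟩ <;> subst h
  · simp
  · simp
  · exact (Finset.card_insert_le _ _).trans (by simp)

lemma starFaces_two {α : Type} [DecidableEq α] {k : ℕ} {P : Fin k → Set α} {z : Fin k → α}
    {t : Finset α} (ht : t ∈ starFaces P z) (hc : t.card = 2) : ∃ j, z j ∈ t := by
  obtain ⟨j, h⟩ := ht
  rcases h with h | ⟨v, hv, h | h⟩ <;> subst h
  · simp at hc
  · simp at hc
  · exact ⟨j, Finset.mem_insert_self _ _⟩

/-- if `s ∈ H_1(K̃_b)` satisfies `s ∉ θ_{1,b}(H_1(K_b)) + im ψ_{b-1}`,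
then `s` has persistence interval `(b, ∞)` in `H_1(K̃_•)`. -/
theorem stmt17 {α : Type} [DecidableEq α] (n k : ℕ)
    (K Kt : ℕ → AbsSC α)
    (hK0 : (K 0).faces = ∅)
    (hKt0 : (Kt 0).faces = ∅)
    (hKmono : ∀ i, i < n → (K i).faces ⊆ (K (i + 1)).faces)
    (hKtmono : ∀ i, i < n → (Kt i).faces ⊆ (Kt (i + 1)).faces)
    (P : Fin k → Set α)
    (hPne : ∀ j, (P j).Nonempty)
    (hPdisj : Pairwise (Function.onFun Disjoint P))
    (hPunion : (⋃ j, P j) = (K 1).vertexSet)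
    (z : Fin k → α)
    (hzinj : Function.Injective z)
    (hznew : ∀ (j : Fin k) (i : ℕ), i ≤ n → z j ∉ (K i).vertexSet)
    (hKt : ∀ i, 1 ≤ i → i ≤ n → (Kt i).faces = (K i).faces ∪ starFaces P z)
    (φ : ∀ i : ℕ, (K i).Homology 1 →ₗ[ZMod 2] (K (i + 1)).Homology 1)
    (ψ : ∀ i : ℕ, (Kt i).Homology 1 →ₗ[ZMod 2] (Kt (i + 1)).Homology 1)
    (θ : ∀ i : ℕ, (K i).Homology 1 →ₗ[ZMod 2] (Kt i).Homology 1)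
    (hφ : ∀ i, i < n → AbsSC.InducedHom (K i) (K (i + 1)) 1 (φ i))
    (hψ : ∀ i, i < n → AbsSC.InducedHom (Kt i) (Kt (i + 1)) 1 (ψ i))
    (hθ : ∀ i, i ≤ n → AbsSC.InducedHom (K i) (Kt i) 1 (θ i))
    (hsq : ∀ i, i < n → (θ (i + 1)).comp (φ i) = (ψ i).comp (θ i))
    (b : ℕ) (hb1 : 1 ≤ b) (hbn : b ≤ n)
    (s : (Kt b).Homology 1)
    (hs : s ∉ LinearMap.range (θ b) ⊔ LinearMap.range (comps ψ (Nat.sub_le b 1))) :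
    HasPersIntervalInf ψ n b s := by
  classical
  obtain ⟨h0, hθspec⟩ := hθ b hbn
  have hKtsub : ∀ i j : ℕ, i ≤ j → j ≤ n → (Kt i).faces ⊆ (Kt j).faces := by
    intro i j hij
    induction j, hij using Nat.le_induction with
    | base => exact fun _ => subset_rfl
    | succ m hm ih => exact fun hmn => (ih (Nat.le_of_succ_le hmn)).trans (hKtmono m hmn)
  have noZ : ∀ i : ℕ, i ≤ n → ∀ t ∈ (K i).faces, ∀ j, z j ∉ t := by
    intro i hin t ht j hzt
    exact hznew j i hin
      ((K i).down_closed ht (Finset.singleton_subset_iff.mpr hzt)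
        ⟨z j, Finset.mem_singleton_self _⟩)
  have two_simplex : ∀ i : ℕ, 1 ≤ i → i ≤ n → ∀ s : (Kt i).simplices 2,
      s.1 ∈ (K i).faces := by
    intro i h1 h2 s
    have hm : (s.1 : Finset α) ∈ (K i).faces ∪ starFaces P z := (hKt i h1 h2).subset s.2.1
    rcases hm with hm | hm
    · exact hm
    · have hcle := starFaces_card_le hm
      have hc3 := s.2.2
      omega
  have bvan : ∀ i : ℕ, 1 ≤ i → i ≤ n → ∀ (w : (Kt i).Chain 2) (e : (Kt i).simplices 1)
      (j : Fin k), z j ∈ e.1 → (Kt i).boundary 1 w e = 0 := by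
    intro i h1 h2 w e j hj
    have hface : ∀ s : (Kt i).simplices 2, (Kt i).faceChain 1 s e = 0 := by
      intro s
      rw [AbsSC.faceChain, Finset.sum_apply']
      refine Finset.sum_eq_zero fun t ht => ?_
      apply Finsupp.single_eq_of_ne'
      intro hte
      apply noZ i h2 s.1 (two_simplex i h1 h2 s) j
      have hsub : t.1 ⊆ s.1 := (Finset.mem_powersetCard.mp t.2).1
      have hv : t.1 = e.1 := congrArg Subtype.val hte
      rw [← hv] at hj
      exact hsub hj
    rw [AbsSC.boundary, Finsupp.lsum_apply, Finsupp.sum_apply, Finsupp.sum]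
    refine Finset.sum_eq_zero fun t ht => ?_
    rw [LinearMap.toSpanSingleton_apply, Finsupp.smul_apply, hface, smul_zero]
  have key : ∀ (j : ℕ) (hbj : b ≤ j) (hjn : j ≤ n) (c : (Kt b).Chain 1)
      (hc : c ∈ (Kt b).cycles 1),
      comps ψ hbj ((Kt b).hClass 1 c hc) =
        (Kt j).hClass 1 (AbsSC.chainMap (Kt b) (Kt j) (hKtsub b j hbj hjn) 1 c)
          (AbsSC.chainMap_cycle _ _ _ c hc) := by
    intro j hbj
    induction j, hbj using Nat.le_induction with
    | base =>
      intro hjn c hc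
      rw [comps_self]
      exact AbsSC.hClass_congr _ _ (AbsSC.chainMap_id _ _ _ c).symm _ _
    | succ m hmb ih =>
      intro hjn c hc
      rw [comps_succ ψ hmb, LinearMap.comp_apply, ih (Nat.le_of_succ_le hjn) c hc]
      obtain ⟨hsubψ, hspec⟩ := hψ m (by omega)
      obtain ⟨hc2, heq2⟩ := hspec _ (AbsSC.chainMap_cycle _ _ _ c hc)
      rw [heq2]
      exact AbsSC.hClass_congr _ _ (AbsSC.chainMap_comp _ _ _ _ _ _ c) _ _
  have hker : ∀ (d' : ℕ) (hbd' : b ≤ d'), d' ≤ n → ∀ x : (Kt b).Homology 1,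
      comps ψ hbd' x = 0 → x ∈ LinearMap.range (θ b) := by
    intro d' hbd' hd'n x hx
    obtain ⟨⟨c, hc⟩, rfl⟩ := Submodule.Quotient.mk_surjective _ x
    have hmk : (Submodule.Quotient.mk ⟨c, hc⟩ : (Kt b).Homology 1) =
        (Kt b).hClass 1 c hc := rfl
    rw [hmk] at hx ⊢
    rw [key d' hbd' hd'n c hc, AbsSC.hClass_eq_zero] at hx
    obtain ⟨w, hw⟩ := hx
    have hsupp : ∀ e ∈ c.support, e.1 ∈ (K b).faces := by
      intro e he
      have hce : c e ≠ 0 := Finsupp.mem_support_iff.mp he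
      have hmem : e.1 ∈ (K b).faces ∪ starFaces P z := (hKt b hb1 hbn).subset e.2.1
      rcases hmem with hm | hm
      · exact hm
      · exfalso
        obtain ⟨j, hj⟩ := starFaces_two hm (by have := e.2.2; omega)
        have hCe : AbsSC.chainMap (Kt b) (Kt d') (hKtsub b d' hbd' hd'n) 1 c
            ⟨e.1, hKtsub b d' hbd' hd'n e.2.1, e.2.2⟩ = c e := by
          rw [AbsSC.chainMap_apply]
          exact Finsupp.mapDomain_apply
            (f := fun t : (Kt b).simplices 1 =>
              (⟨t.1, hKtsub b d' hbd' hd'n t.2.1, t.2.2⟩ : (Kt d').simplices 1))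
            (AbsSC.simplexMap_injective (Kt b) (Kt d') (hKtsub b d' hbd' hd'n) 1) c e
        rw [← hw] at hCe
        rw [bvan d' (hb1.trans hbd') hd'n w _ j hj] at hCe
        exact hce hCe.symm
    have hg := AbsSC.simplexMap_injective (K b) (Kt b) h0 1
    set g := fun t : (K b).simplices 1 => (⟨t.1, h0 t.2.1, t.2.2⟩ : (Kt b).simplices 1)
      with hgdef
    set c' : (K b).Chain 1 := Finsupp.comapDomain g c hg.injOn with hc'def
    have hmapc : AbsSC.chainMap (K b) (Kt b) h0 1 c' = c := by
      rw [AbsSC.chainMap_apply]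
      refine Finsupp.mapDomain_comapDomain g hg c ?_
      intro e he
      exact ⟨⟨e.1, hsupp e he, e.2.2⟩, Subtype.ext rfl⟩
    have hcyc' : c' ∈ (K b).cycles 1 := by
      rw [AbsSC.mem_cycles_one]
      apply AbsSC.chainMap_injective (K b) (Kt b) h0 0
      rw [← AbsSC.boundary_chainMap, hmapc, map_zero]
      exact (AbsSC.mem_cycles_one _ _).mp hc
    obtain ⟨hcc, heq⟩ := hθspec c' hcyc'
    exact ⟨(K b).hClass 1 c' hcyc', by rw [heq]; exact AbsSC.hClass_congr _ _ hmapc _ _⟩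
  refine ⟨hb1, ?_, ?_⟩
  · intro hmem
    exact hs (Submodule.mem_sup_right hmem)
  · intro d' hd' hd'n hmem
    obtain ⟨t, ht⟩ := hmem
    rw [comps_trans ψ (Nat.sub_le b 1) hd' (Nat.le_trans (Nat.sub_le b 1) hd'),
      LinearMap.comp_apply] at ht
    have hzero : comps ψ hd' (s - comps ψ (Nat.sub_le b 1) t) = 0 := by
      rw [map_sub, ht, sub_self]
    obtain ⟨u, hu⟩ := hker d' hd' hd'n _ hzero
    apply hs
    have hdecomp : s = (s - comps ψ (Nat.sub_le b 1) t) + comps ψ (Nat.sub_le b 1) t := by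
      abel
    rw [hdecomp]
    exact Submodule.add_mem_sup ⟨u, hu⟩ ⟨t, rfl⟩
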